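/- Let V be a right Banach ℍ-module, T ∈ B(V) and q₀ ∈ ρ_S(T). Then every q ∈ ℍ satisfying 2 |Re(q) − Re(q₀)| ‖T‖ + | |q|² − |q₀|² | < μ(Q_{q₀}(T)) belongs to ρ_S(T). -/

import Mathlib

/-!
Quaternionic setting: `ℍ` is the real quaternions.  A right Banach `ℍ`-module is
formalized as a real Banach space `V` together with a compatible `Module ℍᵐᵒᵖ V`
structure (right `ℍ`-action) satisfying `‖x • q‖ = ‖x‖ * |q|`; bounded right
`ℍ`-linear operators are the continuous `ℍᵐᵒᵖ`-linear maps `V →L[ℍᵐᵒᵖ] V`.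
-/

open MulOpposite

notation "ℍ" => Quaternion ℝ

section Defs

variable {W : Type*} [NormedAddCommGroup W] [Module ℍᵐᵒᵖ W] [Module ℝ W]
  [SMulCommClass ℍᵐᵒᵖ ℝ W] [ContinuousConstSMul ℝ W]

/-- `Q_q(T) = T² − 2 Re(q) T + |q|² I`. -/
noncomputable def Qs (T : W →L[ℍᵐᵒᵖ] W) (q : ℍ) : W →L[ℍᵐᵒᵖ] W :=
  T * T - (2 * q.re) • T + (‖q‖ ^ 2) • (1 : W →L[ℍᵐᵒᵖ] W)

/-- The S-resolvent set: `q` such that `Q_q(T)` is bijective with bounded inverse,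
i.e. invertible in the ring `B(W)`. -/
noncomputable def sResolvent (T : W →L[ℍᵐᵒᵖ] W) : Set ℍ :=
  {q | IsUnit (Qs T q)}

/-- The S-spectrum `σ_S(T) = ℍ \ ρ_S(T)`. -/
noncomputable def sSpectrum (T : W →L[ℍᵐᵒᵖ] W) : Set ℍ :=
  {q | ¬ IsUnit (Qs T q)}

/-- A compact operator: the image of the closed unit ball is relatively compact. -/
def IsCompactOp (K : W →L[ℍᵐᵒᵖ] W) : Prop :=
  IsCompact (closure (⇑K '' Metric.closedBall (0 : W) 1))

/-- `S` is a quasi-inverse of `T` if `S T = I - K₁` and `T S = I - K₂` with `K₁, K₂` compact. -/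
def IsQuasiInverse (S T : W →L[ℍᵐᵒᵖ] W) : Prop :=
  ∃ K₁ K₂ : W →L[ℍᵐᵒᵖ] W, IsCompactOp K₁ ∧ IsCompactOp K₂ ∧
    S * T = 1 - K₁ ∧ T * S = 1 - K₂

/-- The essential S-spectrum: `q` such that `Q_q(T)` admits no quasi-inverse. -/
noncomputable def essSpectrum (T : W →L[ℍᵐᵒᵖ] W) : Set ℍ :=
  {q | ¬ ∃ S : W →L[ℍᵐᵒᵖ] W, IsQuasiInverse S (Qs T q)}

/-- The Weyl S-spectrum: `⋂ σ_S(T + K)` over all compact `K`. -/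
noncomputable def weylSpectrum (T : W →L[ℍᵐᵒᵖ] W) : Set ℍ :=
  ⋂ K ∈ {K : W →L[ℍᵐᵒᵖ] W | IsCompactOp K}, sSpectrum (T + K)

/-- The 2-sphere `[q] = {h q h⁻¹ : h ∈ ℍ \ {0}}`. -/
def qSphere (q : ℍ) : Set ℍ := {p | ∃ h : ℍ, h ≠ 0 ∧ p = h * q * h⁻¹}

/-- Minimum modulus `μ(T) = inf {‖T x‖ : ‖x‖ = 1}`. -/
noncomputable def muMin (T : W →L[ℍᵐᵒᵖ] W) : ℝ :=
  sInf {c : ℝ | ∃ x : W, ‖x‖ = 1 ∧ c = ‖T x‖}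

/-- Operator norm of a bounded right `ℍ`-linear operator. -/
noncomputable def opNorm (T : W →L[ℍᵐᵒᵖ] W) : ℝ :=
  sInf {c : ℝ | 0 ≤ c ∧ ∀ x : W, ‖T x‖ ≤ c * ‖x‖}

/-- Restriction of `T` to an invariant submodule. -/
noncomputable def restrictOp (T : W →L[ℍᵐᵒᵖ] W) (M : Submodule ℍᵐᵒᵖ W)
    (h : ∀ x ∈ M, T x ∈ M) : ↥M →L[ℍᵐᵒᵖ] ↥M where
  toLinearMap := (T : W →ₗ[ℍᵐᵒᵖ] W).restrict h
  cont := Continuous.subtype_mk (T.continuous.comp continuous_subtype_val) _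

end Defs

section Sub

variable {V : Type*} [NormedAddCommGroup V] [NormedSpace ℝ V]
  [Module ℍᵐᵒᵖ V] [IsScalarTower ℝ ℍᵐᵒᵖ V] [SMulCommClass ℍᵐᵒᵖ ℝ V]

instance (M : Submodule ℍᵐᵒᵖ V) : SMulCommClass ℍᵐᵒᵖ ℝ ↥M := by
  constructor
  intro q r x
  apply Subtype.ext
  simp only [Submodule.coe_smul_of_tower, SetLike.val_smul]
  exact smul_comm q r (x : V)

instance (M : Submodule ℍᵐᵒᵖ V) : ContinuousConstSMul ℝ ↥M := by
  constructor
  intro r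
  have h : Continuous fun x : ↥M => r • (x : V) :=
    (continuous_const_smul r).comp continuous_subtype_val
  exact Continuous.subtype_mk h _

/-- `q` is a right eigenvalue of finite type of `T`: `V` is the direct sum of two closed
`T`-invariant right `ℍ`-submodules `M₁`, `M₂` with `M₁` finite-dimensional over `ℍ`,
`σ_S(T|M₁) ∩ σ_S(T|M₂) = ∅` and `σ_S(T|M₁) = [q]`. -/
noncomputable def IsFiniteTypeEigenvalue (T : V →L[ℍᵐᵒᵖ] V) (q : ℍ) : Prop :=
  ∃ (M₁ M₂ : Submodule ℍᵐᵒᵖ V) (h₁ : ∀ x ∈ M₁, T x ∈ M₁) (h₂ : ∀ x ∈ M₂, T x ∈ M₂),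
    IsClosed (M₁ : Set V) ∧ IsClosed (M₂ : Set V) ∧ IsCompl M₁ M₂ ∧
    FiniteDimensional ℍᵐᵒᵖ ↥M₁ ∧
    sSpectrum (restrictOp T M₁ h₁) ∩ sSpectrum (restrictOp T M₂ h₂) = ∅ ∧
    sSpectrum (restrictOp T M₁ h₁) = qSphere q

end Sub

section AuxProof

variable {V : Type*} [NormedAddCommGroup V] [NormedSpace ℝ V]
  [Module ℍᵐᵒᵖ V] [IsScalarTower ℝ ℍᵐᵒᵖ V] [SMulCommClass ℍᵐᵒᵖ ℝ V]

lemma map_real_smul' (f : V →L[ℍᵐᵒᵖ] V) (r : ℝ) (x : V) : f (r • x) = r • f x := by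
  have h : ∀ y : V, r • y = (r • (1 : ℍᵐᵒᵖ)) • y := fun y => by rw [smul_assoc, one_smul]
  rw [h x, f.map_smul, ← h (f x)]

/-- Realification of an `ℍᵐᵒᵖ`-linear continuous map. -/
noncomputable def toR (f : V →L[ℍᵐᵒᵖ] V) : V →L[ℝ] V :=
  ⟨{ toFun := f, map_add' := f.map_add, map_smul' := fun r x => map_real_smul' f r x },
    f.cont⟩

@[simp] lemma toR_apply (f : V →L[ℍᵐᵒᵖ] V) (x : V) : toR f x = f x := rfl

lemma opNorm_eq_toR (T : V →L[ℍᵐᵒᵖ] V) : opNorm T = ‖toR T‖ := by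
  rw [ContinuousLinearMap.norm_def]; rfl

lemma muMin_smul_le (A : V →L[ℍᵐᵒᵖ] V) (x : V) : muMin A * ‖x‖ ≤ ‖A x‖ := by
  rcases eq_or_ne x 0 with rfl | hx
  · simp
  · have hnx : (0 : ℝ) < ‖x‖ := norm_pos_iff.mpr hx
    set u : V := ‖x‖⁻¹ • x with hu
    have hu1 : ‖u‖ = 1 := by
      rw [hu, norm_smul, norm_inv, norm_norm, inv_mul_cancel₀ hnx.ne']
    have hAu : ‖A u‖ = ‖x‖⁻¹ * ‖A x‖ := by
      rw [hu, map_real_smul' A, norm_smul, norm_inv, norm_norm]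
    have hbdd : BddBelow {c : ℝ | ∃ y : V, ‖y‖ = 1 ∧ c = ‖A y‖} := by
      refine ⟨0, fun c hc => ?_⟩
      obtain ⟨y, -, rfl⟩ := hc
      exact norm_nonneg _
    have hle : muMin A ≤ ‖A u‖ := csInf_le hbdd ⟨u, hu1, rfl⟩
    rw [hAu] at hle
    calc muMin A * ‖x‖ ≤ (‖x‖⁻¹ * ‖A x‖) * ‖x‖ := by
          exact mul_le_mul_of_nonneg_right hle hnx.le
      _ = ‖A x‖ := by field_simp

end AuxProof

theorem stmt12 {V : Type*} [NormedAddCommGroup V] [NormedSpace ℝ V] [CompleteSpace V]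
    [Module ℍᵐᵒᵖ V] [IsScalarTower ℝ ℍᵐᵒᵖ V] [SMulCommClass ℍᵐᵒᵖ ℝ V]
    (hnorm : ∀ (x : V) (q : ℍ), ‖op q • x‖ = ‖x‖ * ‖q‖)
    (T : V →L[ℍᵐᵒᵖ] V) (q₀ : ℍ) (hq₀ : q₀ ∈ sResolvent T) :
    ∀ q : ℍ, 2 * |q.re - q₀.re| * opNorm T + |‖q‖ ^ 2 - ‖q₀‖ ^ 2| < muMin (Qs T q₀) →
      q ∈ sResolvent T := by
  intro q hq
  set ε : ℝ := 2 * |q.re - q₀.re| * opNorm T + |‖q‖ ^ 2 - ‖q₀‖ ^ 2| with hεdef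
  set A : V →L[ℍᵐᵒᵖ] V := Qs T q₀ with hA
  obtain ⟨u, hu⟩ := hq₀
  set S : V →L[ℍᵐᵒᵖ] V := (↑u⁻¹ : V →L[ℍᵐᵒᵖ] V) with hS
  have hAS : A * S = 1 := by rw [hA, hS, ← hu]; exact u.mul_inv
  set c : ℝ := 2 * q₀.re - 2 * q.re with hc
  set d : ℝ := ‖q‖ ^ 2 - ‖q₀‖ ^ 2 with hd
  set D : V →L[ℍᵐᵒᵖ] V := c • T + d • (1 : V →L[ℍᵐᵒᵖ] V) with hD
  have hdecomp : Qs T q = A + D := by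
    rw [hA, hD, hc, hd]
    unfold Qs
    module
  have hTnorm : ∀ x : V, ‖T x‖ ≤ opNorm T * ‖x‖ := by
    intro x
    rw [opNorm_eq_toR]
    exact (toR T).le_opNorm x
  have hDx : ∀ x : V, ‖D x‖ ≤ ε * ‖x‖ := by
    intro x
    have h1 : D x = c • T x + d • x := by
      simp [hD, ContinuousLinearMap.add_apply, ContinuousLinearMap.smul_apply]
    have habs : |c| = 2 * |q.re - q₀.re| := by
      rw [hc]
      rw [show 2 * q₀.re - 2 * q.re = -(2 * (q.re - q₀.re)) by ring, abs_neg, abs_mul]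
      norm_num
    calc ‖D x‖ ≤ ‖c • T x‖ + ‖d • x‖ := h1 ▸ norm_add_le _ _
      _ = |c| * ‖T x‖ + |d| * ‖x‖ := by rw [norm_smul, norm_smul, Real.norm_eq_abs,
          Real.norm_eq_abs]
      _ ≤ |c| * (opNorm T * ‖x‖) + |d| * ‖x‖ := by
          gcongr
          exact hTnorm x
      _ = (2 * |q.re - q₀.re| * opNorm T + |d|) * ‖x‖ := by rw [habs]; ring
      _ = ε * ‖x‖ := by rw [hεdef, hd]
  have hεnonneg : 0 ≤ ε := by
    have h1 : 0 ≤ opNorm T := by rw [opNorm_eq_toR]; exact norm_nonneg _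
    have h2 : 0 ≤ |q.re - q₀.re| := abs_nonneg _
    have h3 : 0 ≤ |‖q‖ ^ 2 - ‖q₀‖ ^ 2| := abs_nonneg _
    rw [hεdef]; nlinarith
  have hμpos : 0 < muMin A := lt_of_le_of_lt hεnonneg hq
  -- bound on S ∘ D
  set E : V →L[ℍᵐᵒᵖ] V := S * D with hE
  have hEx : ∀ x : V, ‖E x‖ ≤ (muMin A)⁻¹ * ε * ‖x‖ := by
    intro x
    have h1 : A (S (D x)) = D x := by
      have := congrArg (fun f : V →L[ℍᵐᵒᵖ] V => f (D x)) hAS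
      simpa using this
    have h2 := muMin_smul_le A (S (D x))
    rw [h1] at h2
    have h3 : ‖S (D x)‖ ≤ (muMin A)⁻¹ * ‖D x‖ := by
      rw [← div_eq_inv_mul, le_div_iff₀ hμpos]
      linarith [h2]
    have h4 : ‖E x‖ = ‖S (D x)‖ := by rw [hE]; rfl
    calc ‖E x‖ ≤ (muMin A)⁻¹ * ‖D x‖ := h4 ▸ h3
      _ ≤ (muMin A)⁻¹ * (ε * ‖x‖) :=
          mul_le_mul_of_nonneg_left (hDx x) (inv_nonneg.mpr hμpos.le)
      _ = (muMin A)⁻¹ * ε * ‖x‖ := by ring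
  have hEnorm : ‖toR E‖ < 1 := by
    have hb : ‖toR E‖ ≤ (muMin A)⁻¹ * ε :=
      ContinuousLinearMap.opNorm_le_bound _
        (by positivity) (fun x => by simpa using hEx x)
    have : (muMin A)⁻¹ * ε < 1 := by
      rw [← div_eq_inv_mul, div_lt_one hμpos]
      exact hq
    linarith
  -- invert 1 + E using the real Neumann series
  set u2 : (V →L[ℝ] V)ˣ := Units.oneSub (-(toR E)) (by rwa [norm_neg])
  have hu2val : (u2 : V →L[ℝ] V) = 1 + toR E := by
    show 1 - -(toR E) = 1 + toR E
    rw [sub_neg_eq_add]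
  set g : V →L[ℝ] V := (↑u2⁻¹ : V →L[ℝ] V) with hg
  set F : V →L[ℍᵐᵒᵖ] V := 1 + E with hF
  have hFtoR : ∀ x : V, F x = (1 + toR E) x := fun x => rfl
  have hg1 : ∀ x : V, g (F x) = x := by
    intro x
    have := congrArg (fun f : V →L[ℝ] V => f x) u2.inv_mul
    simpa [hu2val, ← hFtoR] using this
  have hg2 : ∀ x : V, F (g x) = x := by
    intro x
    have := congrArg (fun f : V →L[ℝ] V => f x) u2.mul_inv
    simpa [hu2val, ← hFtoR] using this
  -- the inverse is ℍᵐᵒᵖ-linear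
  set G : V →L[ℍᵐᵒᵖ] V :=
    ⟨{ toFun := g, map_add' := g.map_add,
       map_smul' := fun p x => by
         have h1 : F (p • g x) = p • x := by
           rw [F.map_smul, hg2]
         calc g (p • x) = g (F (p • g x)) := by rw [h1]
           _ = p • g x := hg1 _ }, g.cont⟩ with hG
  have hFunit : IsUnit F := by
    refine ⟨⟨F, G, ?_, ?_⟩, rfl⟩
    · ext x
      exact hg2 x
    · ext x
      exact hg1 x
  have hAF : A * F = Qs T q := by
    rw [hF, mul_add, mul_one, ← mul_assoc, hAS, one_mul, hdecomp]
  show IsUnit (Qs T q)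
  rw [← hAF]
  exact IsUnit.mul ⟨u, hu.trans hA.symm⟩ hFunit
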